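/- arXiv:1505.00482 — 3 statements merged into one kernel-verified Lean document; each statement's English description precedes it below -/
import Mathlib

section
/- Let p be a bounded probability density on ℝ^d with bounded continuous derivatives up to and including third order, and let p_h = p ∗ K_h be its smoothing by the Gaussian kernel at bandwidth h. Then there exists a constant c₁ > 0 (depending only on p and d) such that for all h ∈ (0,1], sup_{x ∈ ℝ^d} ‖∇p_h(x) − ∇p(x)‖ ≤ c₁ h², where ∇ denotes the gradient and ‖·‖ the Euclidean norm. -/
open MeasureTheory Real

/-- The Gaussian kernel on `ℝ^d` at bandwidth `h`:
`K_h(u) = h^{-d} (2π)^{-d/2} exp(-‖u‖²/(2h²))`. -/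
noncomputable def gaussKernel (d : ℕ) (h : ℝ) (u : EuclideanSpace ℝ (Fin d)) : ℝ :=
  (1 / h ^ d) * (2 * π) ^ (-(d : ℝ) / 2) * Real.exp (-‖u‖ ^ 2 / (2 * h ^ 2))

/-- The smoothed density `p_h = p ∗ K_h`. -/
noncomputable def smoothedDensity (d : ℕ) (p : EuclideanSpace ℝ (Fin d) → ℝ) (h : ℝ)
    (x : EuclideanSpace ℝ (Fin d)) : ℝ :=
  ∫ u, p (x - u) * gaussKernel d h u

lemma gK_eq (d : ℕ) (h : ℝ) (u : EuclideanSpace ℝ (Fin d)) :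
    gaussKernel d h u
      = ((1 / h ^ d) * (2 * π) ^ (-(d : ℝ) / 2)) * rexp (-(1 / (2 * h ^ 2)) * ‖u‖ ^ 2) := by
  unfold gaussKernel
  ring_nf

lemma gK_nonneg (d : ℕ) {h : ℝ} (hh : 0 < h) (u : EuclideanSpace ℝ (Fin d)) :
    0 ≤ gaussKernel d h u := by
  unfold gaussKernel
  have h1 : (0:ℝ) < 2 * π := by positivity
  positivity

lemma gK_cont (d : ℕ) (h : ℝ) : Continuous (gaussKernel d h) := by
  unfold gaussKernel
  fun_prop

lemma gK_neg (d : ℕ) (h : ℝ) (u : EuclideanSpace ℝ (Fin d)) :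
    gaussKernel d h (-u) = gaussKernel d h u := by
  simp [gaussKernel]

lemma integrable_rexp_E {d : ℕ} {b : ℝ} (hb : 0 < b) :
    Integrable fun v : EuclideanSpace ℝ (Fin d) => rexp (-b * ‖v‖ ^ 2) := by
  have h := (GaussianFourier.integrable_cexp_neg_mul_sq_norm_add (V := EuclideanSpace ℝ (Fin d))
      (b := (b : ℂ)) (by simpa using hb) 0 0).norm
  refine h.congr ?_
  filter_upwards with v
  rw [Complex.norm_exp]
  norm_num [← Complex.ofReal_pow]

lemma integrable_sq_rexp_E {d : ℕ} {b : ℝ} (hb : 0 < b) :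
    Integrable fun v : EuclideanSpace ℝ (Fin d) => ‖v‖ ^ 2 * rexp (-b * ‖v‖ ^ 2) := by
  have hb2 : 0 < b / 2 := by linarith
  refine Integrable.mono' ((integrable_rexp_E (d := d) hb2).const_mul (2 / b)) ?_ ?_
  · exact (Continuous.mul (by fun_prop) (by fun_prop)).aestronglyMeasurable
  · filter_upwards with v
    have key : b / 2 * ‖v‖ ^ 2 ≤ rexp (b / 2 * ‖v‖ ^ 2) := by
      have := Real.add_one_le_exp (b / 2 * ‖v‖ ^ 2); linarith
    have h2 : ‖v‖ ^ 2 ≤ 2 / b * rexp (b / 2 * ‖v‖ ^ 2) := by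
      calc ‖v‖ ^ 2 = 2 / b * (b / 2 * ‖v‖ ^ 2) := by field_simp
        _ ≤ 2 / b * rexp (b / 2 * ‖v‖ ^ 2) :=
            mul_le_mul_of_nonneg_left key (by positivity)
    rw [Real.norm_eq_abs, abs_of_nonneg (by positivity)]
    calc ‖v‖ ^ 2 * rexp (-b * ‖v‖ ^ 2)
        ≤ (2 / b * rexp (b / 2 * ‖v‖ ^ 2)) * rexp (-b * ‖v‖ ^ 2) :=
          mul_le_mul_of_nonneg_right h2 (Real.exp_nonneg _)
      _ = 2 / b * rexp (-(b / 2) * ‖v‖ ^ 2) := by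
          rw [mul_assoc, ← Real.exp_add]; ring_nf

lemma inv_two_h_sq_pos {h : ℝ} (hh : 0 < h) : 0 < 1 / (2 * h ^ 2) := by positivity

lemma gK_integrable (d : ℕ) {h : ℝ} (hh : 0 < h) : Integrable (gaussKernel d h) := by
  have := (integrable_rexp_E (d := d) (inv_two_h_sq_pos hh)).const_mul
      ((1 / h ^ d) * (2 * π) ^ (-(d : ℝ) / 2))
  refine this.congr ?_
  filter_upwards with u
  rw [gK_eq]

lemma gK_sq_integrable (d : ℕ) {h : ℝ} (hh : 0 < h) :
    Integrable fun u : EuclideanSpace ℝ (Fin d) => ‖u‖ ^ 2 * gaussKernel d h u := by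
  have := (integrable_sq_rexp_E (d := d) (inv_two_h_sq_pos hh)).const_mul
      ((1 / h ^ d) * (2 * π) ^ (-(d : ℝ) / 2))
  refine this.congr ?_
  filter_upwards with u
  rw [gK_eq]; ring

lemma gK_norm_integrable (d : ℕ) {h : ℝ} (hh : 0 < h) :
    Integrable fun u : EuclideanSpace ℝ (Fin d) => ‖u‖ * gaussKernel d h u := by
  refine Integrable.mono' ((gK_integrable d hh).add (gK_sq_integrable d hh)) ?_ ?_
  · exact (continuous_norm.mul (gK_cont d h)).aestronglyMeasurable
  · filter_upwards with u
    have h1 : 0 ≤ gaussKernel d h u := gK_nonneg d hh u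
    have h2 : ‖u‖ ≤ 1 + ‖u‖ ^ 2 := by nlinarith [norm_nonneg u, sq_nonneg (‖u‖ - 1)]
    rw [Real.norm_eq_abs, abs_of_nonneg (by positivity)]
    simp only [Pi.add_apply]
    nlinarith

lemma gK_integral (d : ℕ) {h : ℝ} (hh : 0 < h) : ∫ u, gaussKernel d h u = 1 := by
  simp_rw [gK_eq]
  rw [integral_const_mul, GaussianFourier.integral_rexp_neg_mul_sq_norm (inv_two_h_sq_pos hh)]
  rw [finrank_euclideanSpace_fin]
  have h1 : π / (1 / (2 * h ^ 2)) = (2 * π) * h ^ 2 := by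
    field_simp
  have h2 : ((h : ℝ) ^ 2) ^ ((d : ℝ) / 2) = h ^ d := by
    rw [← Real.rpow_natCast h 2, ← Real.rpow_mul hh.le, ← Real.rpow_natCast h d]
    congr 1
    push_cast
    ring
  have h3 : (2 * π : ℝ) ^ ((d : ℝ) / 2) ≠ 0 := ne_of_gt (Real.rpow_pos_of_pos (by positivity) _)
  have h4 : (h : ℝ) ^ d ≠ 0 := pow_ne_zero _ hh.ne'
  rw [h1, show ((2 * π) * h ^ 2 : ℝ) ^ ((d : ℝ) / 2)
      = (2 * π : ℝ) ^ ((d : ℝ) / 2) * ((h : ℝ) ^ 2) ^ ((d : ℝ) / 2) from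
      Real.mul_rpow (by positivity) (by positivity), h2,
    neg_div, Real.rpow_neg (by positivity : (0:ℝ) ≤ 2 * π)]
  field_simp

lemma gK_moment (d : ℕ) {h : ℝ} (hh : 0 < h) :
    ∫ u, ‖u‖ ^ 2 * gaussKernel d h u
      = h ^ 2 * ∫ v : EuclideanSpace ℝ (Fin d), ‖v‖ ^ 2 * gaussKernel d 1 v := by
  have hd : (h : ℝ) ^ d ≠ 0 := pow_ne_zero _ hh.ne'
  have hcv := MeasureTheory.Measure.integral_comp_smul (μ := volume)
      (fun u : EuclideanSpace ℝ (Fin d) => ‖u‖ ^ 2 * gaussKernel d h u) h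
  rw [finrank_euclideanSpace_fin] at hcv
  have hpt : ∀ x : EuclideanSpace ℝ (Fin d),
      ‖h • x‖ ^ 2 * gaussKernel d h (h • x) = (h ^ 2 / h ^ d) * (‖x‖ ^ 2 * gaussKernel d 1 x) := by
    intro x
    have hn : ‖h • x‖ ^ 2 = h ^ 2 * ‖x‖ ^ 2 := by
      rw [norm_smul, Real.norm_eq_abs, abs_of_pos hh, mul_pow]
    unfold gaussKernel
    rw [hn]
    have harg : -(h ^ 2 * ‖x‖ ^ 2) / (2 * h ^ 2) = -‖x‖ ^ 2 / (2 * 1 ^ 2) := by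
      field_simp
    rw [harg]
    field_simp
    ring
  rw [integral_congr_ae (Filter.Eventually.of_forall hpt), integral_const_mul] at hcv
  rw [abs_of_pos (by positivity : (0:ℝ) < (h ^ d)⁻¹), smul_eq_mul] at hcv
  have : (h:ℝ) ^ 2 / h ^ d * ∫ x : EuclideanSpace ℝ (Fin d), ‖x‖ ^ 2 * gaussKernel d 1 x
      = (h ^ d)⁻¹ * ∫ u, ‖u‖ ^ 2 * gaussKernel d h u := hcv
  field_simp at this
  linarith [this]

noncomputable instance instNACGEuc2 (d : ℕ) :
    NormedAddCommGroup (EuclideanSpace ℝ (Fin d) →L[ℝ] EuclideanSpace ℝ (Fin d) →L[ℝ] ℝ) :=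
  ContinuousLinearMap.toNormedAddCommGroup

noncomputable instance instNSEuc2 (d : ℕ) :
    NormedSpace ℝ (EuclideanSpace ℝ (Fin d) →L[ℝ] EuclideanSpace ℝ (Fin d) →L[ℝ] ℝ) :=
  ContinuousLinearMap.toNormedSpace

set_option maxHeartbeats 2000000 in
/-- For a bounded probability density `p` on `ℝ^d` with bounded continuous
derivatives up to and including third order, there is a constant `c₁ > 0` such that for all
`h ∈ (0, 1]`, `sup_x ‖∇p_h(x) - ∇p(x)‖ ≤ c₁ h²`. -/
theorem kernel_smoothing_gradient_bias_bound (d : ℕ) (p : EuclideanSpace ℝ (Fin d) → ℝ)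
    (hp_nonneg : ∀ x, 0 ≤ p x)
    (hp_int : ∫ x, p x = 1)
    (hp_smooth : ContDiff ℝ 3 p)
    (hp_deriv_bdd : ∀ i : ℕ, i ≤ 3 → ∃ M : ℝ, ∀ x, ‖iteratedFDeriv ℝ i p x‖ ≤ M) :
    ∃ c₁ > (0 : ℝ), ∀ h : ℝ, h ∈ Set.Ioc (0 : ℝ) 1 →
      ∀ x, ‖gradient (smoothedDensity d p h) x - gradient p x‖ ≤ c₁ * h ^ 2 := by
  obtain ⟨M₀, hM₀⟩ := hp_deriv_bdd 0 (by norm_num)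
  obtain ⟨M₁, hM₁⟩ := hp_deriv_bdd 1 (by norm_num)
  obtain ⟨M₃, hM₃⟩ := hp_deriv_bdd 3 le_rfl
  set g : EuclideanSpace ℝ (Fin d) → (EuclideanSpace ℝ (Fin d) →L[ℝ] ℝ) := fderiv ℝ p with hg_def
  set g₂ : EuclideanSpace ℝ (Fin d) → (EuclideanSpace ℝ (Fin d) →L[ℝ] (EuclideanSpace ℝ (Fin d) →L[ℝ] ℝ)) := fderiv ℝ g with hg₂_def
  have hM₀' : ∀ y, ‖p y‖ ≤ M₀ := by
    intro y; rw [← norm_iteratedFDeriv_zero (𝕜 := ℝ) (f := p) (x := y)]; exact hM₀ y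
  have hM₁' : ∀ y, ‖g y‖ ≤ M₁ := by
    intro y
    rw [hg_def, ← norm_iteratedFDeriv_zero (𝕜 := ℝ) (f := fderiv ℝ p) (x := y), norm_iteratedFDeriv_fderiv]
    simpa using hM₁ y
  have hM₃' : ∀ z, ‖fderiv ℝ g₂ z‖ ≤ M₃ := by
    intro z
    rw [hg₂_def, hg_def, ← norm_iteratedFDeriv_zero (𝕜 := ℝ) (f := fderiv ℝ (fderiv ℝ (fderiv ℝ p))) (x := z), norm_iteratedFDeriv_fderiv,
      norm_iteratedFDeriv_fderiv, norm_iteratedFDeriv_fderiv]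
    simpa using hM₃ z
  have hM₃0 : 0 ≤ M₃ := le_trans (norm_nonneg _) (hM₃' 0)
  have hg_smooth : ContDiff ℝ 2 g := hp_smooth.fderiv_right (by norm_num)
  have hg₂_smooth : ContDiff ℝ 1 g₂ := hg_smooth.fderiv_right (by norm_num)
  have hg_cont : Continuous g := hg_smooth.continuous
  have hg₂_cont : Continuous g₂ := hg₂_smooth.continuous
  have hg_diff : ∀ z, HasFDerivAt g (g₂ z) z := fun z =>
    ((hg_smooth.differentiable (by norm_num)) z).hasFDerivAt
  have hp_diff : ∀ z, HasFDerivAt p (g z) z := fun z =>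
    ((hp_smooth.differentiable (by norm_num)) z).hasFDerivAt
  -- Taylor bound
  have taylor : ∀ x u : EuclideanSpace ℝ (Fin d), ‖g (x - u) - g x + (g₂ x) u‖ ≤ M₃ * ‖u‖ ^ 2 := by
    intro x u
    set φ : EuclideanSpace ℝ (Fin d) → (EuclideanSpace ℝ (Fin d) →L[ℝ] ℝ) :=
      fun z => g z - (g₂ x) (z - x) with hφ_def
    have hφ_diff : ∀ z, HasFDerivAt φ (g₂ z - g₂ x) z := by
      intro z
      have h1 : HasFDerivAt (fun z : EuclideanSpace ℝ (Fin d) => (g₂ x) (z - x)) (g₂ x) z := by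
        have h0 := (g₂ x).hasFDerivAt.comp z ((hasFDerivAt_id z).sub_const x)
        rw [ContinuousLinearMap.comp_id] at h0
        exact h0
      exact (hg_diff z).sub h1
    have hg₂_lip : ∀ z, ‖g₂ z - g₂ x‖ ≤ M₃ * ‖z - x‖ := by
      intro z
      exact (convex_univ (𝕜 := ℝ)).norm_image_sub_le_of_norm_fderiv_le
        (fun w _ => ((hg₂_smooth.differentiable (by norm_num)) w))
        (fun w _ => hM₃' w) (Set.mem_univ x) (Set.mem_univ z)
    have hmain : ‖φ (x - u) - φ x‖ ≤ (M₃ * ‖u‖) * ‖(x - u) - x‖ := by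
      refine (convex_closedBall x ‖u‖).norm_image_sub_le_of_norm_fderiv_le
        (fun w _ => (hφ_diff w).differentiableAt) (fun w hw => ?_) ?_ ?_
      · rw [(hφ_diff w).fderiv]
        calc ‖g₂ w - g₂ x‖ ≤ M₃ * ‖w - x‖ := hg₂_lip w
          _ ≤ M₃ * ‖u‖ := by
              have := mem_closedBall_iff_norm.mp hw
              exact mul_le_mul_of_nonneg_left this hM₃0
      · exact Metric.mem_closedBall_self (norm_nonneg u)
      · rw [mem_closedBall_iff_norm]
        simp
    have hφ_eq : φ (x - u) - φ x = g (x - u) - g x + (g₂ x) u := by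
      rw [hφ_def]
      simp only [sub_self, map_zero, sub_zero, sub_sub_cancel_left, map_neg]
      abel
    rw [hφ_eq] at hmain
    calc ‖g (x - u) - g x + (g₂ x) u‖ ≤ (M₃ * ‖u‖) * ‖(x - u) - x‖ := hmain
      _ = M₃ * ‖u‖ ^ 2 := by
          rw [sub_sub_cancel_left, norm_neg]; ring
  -- vanishing odd moment
  have hodd : ∀ (h : ℝ), 0 < h → ∀ B : EuclideanSpace ℝ (Fin d) →L[ℝ] (EuclideanSpace ℝ (Fin d) →L[ℝ] ℝ),
      ∫ u, gaussKernel d h u • B u = 0 := by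
    intro h hh B
    have hneg : ∀ u : EuclideanSpace ℝ (Fin d),
        gaussKernel d h (-u) • B (-u) = -(gaussKernel d h u • B u) := by
      intro u
      rw [gK_neg, map_neg, smul_neg]
    have h1 : ∫ u : EuclideanSpace ℝ (Fin d), gaussKernel d h (-u) • B (-u)
        = ∫ u, gaussKernel d h u • B u :=
      integral_neg_eq_self (fun u : EuclideanSpace ℝ (Fin d) => gaussKernel d h u • B u) volume
    have h2 : ∫ u : EuclideanSpace ℝ (Fin d), gaussKernel d h (-u) • B (-u)
        = -∫ u, gaussKernel d h u • B u := by
      rw [show (fun u : EuclideanSpace ℝ (Fin d) => gaussKernel d h (-u) • B (-u))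
          = fun u : EuclideanSpace ℝ (Fin d) => -(gaussKernel d h u • B u) from funext hneg,
        integral_neg]
    have h3 : ∫ u : EuclideanSpace ℝ (Fin d), gaussKernel d h u • B u
        = -∫ u, gaussKernel d h u • B u := h1.symm.trans h2
    have := add_eq_zero_iff_eq_neg.mpr h3
    have h4 : (2 : ℝ) • ∫ u : EuclideanSpace ℝ (Fin d), gaussKernel d h u • B u = 0 := by
      rw [two_smul]; exact this
    simpa using (smul_eq_zero.mp h4).resolve_left (by norm_num)
  -- derivative of the smoothed density
  have hderiv : ∀ (h : ℝ), 0 < h → ∀ x : EuclideanSpace ℝ (Fin d),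
      HasFDerivAt (smoothedDensity d p h) (∫ u, gaussKernel d h u • g (x - u)) x := by
    intro h hh x₀
    have hK_int := gK_integrable d hh
    have hK_nn : ∀ u, 0 ≤ gaussKernel d h u := gK_nonneg d hh
    have hcont : ∀ x : EuclideanSpace ℝ (Fin d),
        Continuous fun u : EuclideanSpace ℝ (Fin d) => p (x - u) * gaussKernel d h u := by
      intro x
      exact (hp_smooth.continuous.comp (continuous_const.sub continuous_id)).mul (gK_cont d h)
    have key := hasFDerivAt_integral_of_dominated_of_fderiv_le
      (F := fun (x : EuclideanSpace ℝ (Fin d)) (u : EuclideanSpace ℝ (Fin d)) =>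
        p (x - u) * gaussKernel d h u)
      (F' := fun (x : EuclideanSpace ℝ (Fin d)) (u : EuclideanSpace ℝ (Fin d)) =>
        gaussKernel d h u • g (x - u))
      (μ := volume) (x₀ := x₀) (bound := fun u => M₁ * gaussKernel d h u)
      (Metric.ball_mem_nhds x₀ one_pos)
      (Filter.Eventually.of_forall fun x => (hcont x).aestronglyMeasurable)
      ?_ ?_ ?_ (hK_int.const_mul M₁) ?_
    · exact key
    · refine Integrable.mono' (hK_int.const_mul M₀) (hcont x₀).aestronglyMeasurable ?_
      filter_upwards with u
      rw [Real.norm_eq_abs, abs_mul, abs_of_nonneg (hK_nn u)]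
      exact mul_le_mul_of_nonneg_right
        ((abs_le.mpr ⟨neg_le_of_neg_le (by
            have := hM₀' (x₀ - u); rw [Real.norm_eq_abs] at this
            linarith [abs_le.mp this |>.1]), by
            have := hM₀' (x₀ - u); rw [Real.norm_eq_abs] at this
            linarith [abs_le.mp this |>.2]⟩ : |p (x₀ - u)| ≤ M₀)) (hK_nn u)
    · exact (Continuous.smul (gK_cont d h)
        (hg_cont.comp (continuous_const.sub continuous_id))).aestronglyMeasurable
    · filter_upwards with u
      intro x _
      calc ‖gaussKernel d h u • g (x - u)‖
          = ‖gaussKernel d h u‖ * ‖g (x - u)‖ :=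
            norm_smul (β := EuclideanSpace ℝ (Fin d) →L[ℝ] ℝ) _ _
        _ = gaussKernel d h u * ‖g (x - u)‖ := by
            rw [Real.norm_eq_abs, abs_of_nonneg (hK_nn u)]
        _ ≤ gaussKernel d h u * M₁ := mul_le_mul_of_nonneg_left (hM₁' _) (hK_nn u)
        _ = M₁ * gaussKernel d h u := mul_comm _ _
    · filter_upwards with u
      intro x _
      have h1 : HasFDerivAt (fun x : EuclideanSpace ℝ (Fin d) => p (x - u)) (g (x - u)) x := by
        have := (hp_diff (x - u)).comp x ((hasFDerivAt_id x).sub_const u)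
        simpa [Function.comp_def] using this
      exact h1.mul_const (gaussKernel d h u)
  set C₂ : ℝ := ∫ v : EuclideanSpace ℝ (Fin d), ‖v‖ ^ 2 * gaussKernel d 1 v with hC₂_def
  have hC₂0 : 0 ≤ C₂ := integral_nonneg fun v => by
    have := gK_nonneg d one_pos v; positivity
  refine ⟨M₃ * C₂ + 1, by positivity, ?_⟩
  rintro h ⟨hh0, hh1⟩ x
  have hK_int := gK_integrable d hh0
  have hK1_int := gK_norm_integrable d hh0
  have hK2_int := gK_sq_integrable d hh0
  -- integrability of the three pieces
  have J1 : Integrable fun u : EuclideanSpace ℝ (Fin d) => gaussKernel d h u • g (x - u) := by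
    refine Integrable.mono' (hK_int.const_mul M₁) ?_ ?_
    · exact (Continuous.smul (gK_cont d h)
        (hg_cont.comp (continuous_const.sub continuous_id))).aestronglyMeasurable
    · filter_upwards with u
      calc ‖gaussKernel d h u • g (x - u)‖
          = ‖gaussKernel d h u‖ * ‖g (x - u)‖ := norm_smul (β := EuclideanSpace ℝ (Fin d) →L[ℝ] ℝ) _ _
        _ = gaussKernel d h u * ‖g (x - u)‖ := by
            rw [Real.norm_eq_abs, abs_of_nonneg (gK_nonneg d hh0 u)]
        _ ≤ gaussKernel d h u * M₁ :=
            mul_le_mul_of_nonneg_left (hM₁' _) (gK_nonneg d hh0 u)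
        _ = M₁ * gaussKernel d h u := mul_comm _ _
  have J2 : Integrable fun u : EuclideanSpace ℝ (Fin d) => gaussKernel d h u • g x := hK_int.smul_const (g x)
  have J3 : Integrable fun u : EuclideanSpace ℝ (Fin d) => gaussKernel d h u • (g₂ x) u := by
    refine Integrable.mono' (hK1_int.const_mul ‖g₂ x‖) ?_ ?_
    · exact (Continuous.smul (gK_cont d h) ((g₂ x).continuous)).aestronglyMeasurable
    · filter_upwards with u
      calc ‖gaussKernel d h u • (g₂ x) u‖
          = ‖gaussKernel d h u‖ * ‖(g₂ x) u‖ := norm_smul (β := EuclideanSpace ℝ (Fin d) →L[ℝ] ℝ) _ _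
        _ = gaussKernel d h u * ‖(g₂ x) u‖ := by
            rw [Real.norm_eq_abs, abs_of_nonneg (gK_nonneg d hh0 u)]
        _ ≤ gaussKernel d h u * (‖g₂ x‖ * ‖u‖) :=
            mul_le_mul_of_nonneg_left ((g₂ x).le_opNorm u) (gK_nonneg d hh0 u)
        _ = ‖g₂ x‖ * (‖u‖ * gaussKernel d h u) := by ring
  -- the key difference formula
  have hfd : fderiv ℝ (smoothedDensity d p h) x = ∫ u, gaussKernel d h u • g (x - u) :=
    (hderiv h hh0 x).fderiv
  have hgx : g x = ∫ u : EuclideanSpace ℝ (Fin d), gaussKernel d h u • g x := by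
    rw [integral_smul_const, gK_integral d hh0, one_smul]
  have key : fderiv ℝ (smoothedDensity d p h) x - g x
      = ∫ u, gaussKernel d h u • (g (x - u) - g x + (g₂ x) u) := by
    rw [hfd]
    calc (∫ u, gaussKernel d h u • g (x - u)) - g x
        = (∫ u, gaussKernel d h u • g (x - u)) - ∫ u : EuclideanSpace ℝ (Fin d), gaussKernel d h u • g x := by
          rw [← hgx]
      _ = ∫ u, (gaussKernel d h u • g (x - u) - gaussKernel d h u • g x) :=
          (integral_sub J1 J2).symm
      _ = (∫ u, (gaussKernel d h u • g (x - u) - gaussKernel d h u • g x))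
            + ∫ u, gaussKernel d h u • (g₂ x) u := by
          rw [hodd h hh0 (g₂ x), add_zero]
      _ = ∫ u, ((gaussKernel d h u • g (x - u) - gaussKernel d h u • g x)
            + gaussKernel d h u • (g₂ x) u) := (integral_add (J1.sub J2) J3).symm
      _ = ∫ u, gaussKernel d h u • (g (x - u) - g x + (g₂ x) u) := by
          congr 1; funext u; rw [smul_add, smul_sub]
  -- norm bound
  have hnorm : ‖fderiv ℝ (smoothedDensity d p h) x - g x‖ ≤ M₃ * (h ^ 2 * C₂) := by
    rw [key]
    have hb : ∀ u : EuclideanSpace ℝ (Fin d), ‖gaussKernel d h u • (g (x - u) - g x + (g₂ x) u)‖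
        ≤ M₃ * (‖u‖ ^ 2 * gaussKernel d h u) := by
      intro u
      calc ‖gaussKernel d h u • (g (x - u) - g x + (g₂ x) u)‖
          = ‖gaussKernel d h u‖ * ‖g (x - u) - g x + (g₂ x) u‖ := norm_smul (β := EuclideanSpace ℝ (Fin d) →L[ℝ] ℝ) _ _
        _ = gaussKernel d h u * ‖g (x - u) - g x + (g₂ x) u‖ := by
            rw [Real.norm_eq_abs, abs_of_nonneg (gK_nonneg d hh0 u)]
        _ ≤ gaussKernel d h u * (M₃ * ‖u‖ ^ 2) :=
            mul_le_mul_of_nonneg_left (taylor x u) (gK_nonneg d hh0 u)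
        _ = M₃ * (‖u‖ ^ 2 * gaussKernel d h u) := by ring
    calc ‖∫ u, gaussKernel d h u • (g (x - u) - g x + (g₂ x) u)‖
        ≤ ∫ u, M₃ * (‖u‖ ^ 2 * gaussKernel d h u) :=
          norm_integral_le_of_norm_le (hK2_int.const_mul M₃)
            (Filter.Eventually.of_forall hb)
      _ = M₃ * ∫ u, ‖u‖ ^ 2 * gaussKernel d h u := integral_const_mul _ _
      _ = M₃ * (h ^ 2 * C₂) := by rw [gK_moment d hh0]
  -- convert gradient to fderiv
  have hgrad : ‖gradient (smoothedDensity d p h) x - gradient p x‖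
      = ‖fderiv ℝ (smoothedDensity d p h) x - g x‖ := by
    unfold gradient
    rw [← map_sub, LinearIsometryEquiv.norm_map]
  rw [hgrad]
  calc ‖fderiv ℝ (smoothedDensity d p h) x - g x‖ ≤ M₃ * (h ^ 2 * C₂) := hnorm
    _ = M₃ * C₂ * h ^ 2 := by ring
    _ ≤ (M₃ * C₂ + 1) * h ^ 2 := by nlinarith [sq_nonneg h]
end

section
/- Let p, q : ℝ^d → ℝ be continuously differentiable, let η₁ = sup_x ‖∇p(x) − ∇q(x)‖ with 0 < η₁ < ∞, and assume p is twice differentiable with κ₂ := sup_x ‖∇²p(x)‖ ∈ (0, ∞), where ‖∇²p(x)‖ is the operator norm of the Hessian (so ∇p is κ₂-Lipschitz). Let π, π̃ : [0, ∞) → ℝ^d be differentiable curves with π(0) = π̃(0) = x, π′(t) = ∇p(π(t)) and π̃′(t) = ∇q(π̃(t)) for all t ≥ 0. Then for all t ≥ 0, ‖π̃(t) − π(t)‖ ≤ (η₁ / (κ₂ √d)) · exp(κ₂ √d · t). -/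
open Real

/-- Key elementary inequality: for `a ≥ 1` and `u ≥ 0`, `a * (exp u - 1) ≤ exp (a * u)`. -/
lemma aux_exp_ineq {a u : ℝ} (ha : 1 ≤ a) (hu : 0 ≤ u) :
    a * (Real.exp u - 1) ≤ Real.exp (a * u) := by
  have hy : (0:ℝ) ≤ Real.exp u - 1 := by
    have := Real.one_le_exp hu
    linarith
  have hb : 1 + a * (Real.exp u - 1) ≤ (1 + (Real.exp u - 1)) ^ a :=
    one_add_mul_self_le_rpow_one_add (by linarith) ha
  have he : (1 + (Real.exp u - 1)) ^ a = Real.exp (a * u) := by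
    rw [show (1 + (Real.exp u - 1)) = Real.exp u by ring, ← Real.exp_mul, mul_comm]
  rw [← he]
  linarith

/-- Let `p, q : ℝ^d → ℝ` be continuously differentiable with
`sup_x ‖∇p(x) − ∇q(x)‖ ≤ η₁` (`0 < η₁`), and let `p` be twice differentiable with
`sup_x ‖∇²p(x)‖ ≤ κ₂` (`0 < κ₂`, operator norm, so `∇p` is `κ₂`-Lipschitz).  If `π₁, π₂` are
gradient flow lines of `p` and `q` starting at the same point `x`, then for every `t ≥ 0`,
`‖π₂(t) − π₁(t)‖ ≤ (η₁ / (κ₂ √d)) exp(κ₂ √d t)`. -/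
theorem flow_perturbation_bound (d : ℕ) (hd : 1 ≤ d)
    (p q : EuclideanSpace ℝ (Fin d) → ℝ)
    (hp : ContDiff ℝ 2 p) (hq : ContDiff ℝ 1 q)
    (η₁ : ℝ) (hη₁_pos : 0 < η₁)
    (hη₁ : ∀ x, ‖gradient p x - gradient q x‖ ≤ η₁)
    (κ₂ : ℝ) (hκ₂_pos : 0 < κ₂)
    (hκ₂ : ∀ x, ‖fderiv ℝ (gradient p) x‖ ≤ κ₂)
    (x : EuclideanSpace ℝ (Fin d))
    (π₁ π₂ : ℝ → EuclideanSpace ℝ (Fin d))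
    (h₁0 : π₁ 0 = x) (h₂0 : π₂ 0 = x)
    (hπ₁ : ∀ t : ℝ, 0 ≤ t → HasDerivAt π₁ (gradient p (π₁ t)) t)
    (hπ₂ : ∀ t : ℝ, 0 ≤ t → HasDerivAt π₂ (gradient q (π₂ t)) t) :
    ∀ t : ℝ, 0 ≤ t →
      ‖π₂ t - π₁ t‖ ≤ η₁ / (κ₂ * Real.sqrt d) * Real.exp (κ₂ * Real.sqrt d * t) := by
  intro t ht
  -- `gradient p` is differentiable
  have hgraddiff : Differentiable ℝ (gradient p) := by
    have h1 : ContDiff ℝ 1 (fderiv ℝ p) := hp.fderiv_right le_rfl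
    exact fun y =>
      ((InnerProductSpace.toDual ℝ
        (EuclideanSpace ℝ (Fin d))).symm.differentiable.differentiableAt).comp y
        (h1.differentiable one_ne_zero y)
  -- `gradient p` is `κ₂`-Lipschitz
  have hlip : LipschitzWith κ₂.toNNReal (gradient p) := by
    apply lipschitzWith_of_nnnorm_fderiv_le hgraddiff
    intro y
    rw [← NNReal.coe_le_coe, coe_nnnorm, Real.coe_toNNReal _ hκ₂_pos.le]
    exact hκ₂ y
  -- Grönwall
  have key := dist_le_of_approx_trajectories_ODE (v := fun _ y => gradient p y)
    (K := κ₂.toNNReal) (f := π₁) (g := π₂) (f' := fun s => gradient p (π₁ s))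
    (g' := fun s => gradient q (π₂ s)) (a := 0) (b := t) (εf := 0) (εg := η₁) (δ := 0)
    (fun _ => hlip)
    (fun s hs => ((hπ₁ s hs.1).continuousAt).continuousWithinAt)
    (fun s hs => (hπ₁ s hs.1).hasDerivWithinAt)
    (fun s hs => by simp)
    (fun s hs => ((hπ₂ s hs.1).continuousAt).continuousWithinAt)
    (fun s hs => (hπ₂ s hs.1).hasDerivWithinAt)
    (fun s hs => by
      rw [dist_eq_norm, norm_sub_rev]
      exact hη₁ (π₂ s))
    (by simp [h₁0, h₂0])
    t ⟨le_refl 0 |>.trans ht, le_refl t⟩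
  have hKcoe : (κ₂.toNNReal : ℝ) = κ₂ := Real.coe_toNNReal _ hκ₂_pos.le
  rw [gronwallBound] at key
  simp only [hKcoe, sub_zero, zero_add] at key
  rw [if_neg hκ₂_pos.ne'] at key
  have key2 : ‖π₂ t - π₁ t‖ ≤ η₁ / κ₂ * (Real.exp (κ₂ * t) - 1) := by
    rw [← dist_eq_norm, dist_comm]
    linarith [key]
  -- final elementary estimate
  set a : ℝ := Real.sqrt d with ha_def
  have ha : 1 ≤ a := by
    rw [ha_def, show (1:ℝ) = Real.sqrt 1 by simp]
    exact Real.sqrt_le_sqrt (by exact_mod_cast hd)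
  have ha0 : 0 < a := lt_of_lt_of_le one_pos ha
  have hexp := aux_exp_ineq ha (mul_nonneg hκ₂_pos.le ht)
  have h3 : η₁ / (κ₂ * a) * (a * (Real.exp (κ₂ * t) - 1))
      ≤ η₁ / (κ₂ * a) * Real.exp (a * (κ₂ * t)) :=
    mul_le_mul_of_nonneg_left hexp (by positivity)
  have h4 : η₁ / (κ₂ * a) * (a * (Real.exp (κ₂ * t) - 1))
      = η₁ / κ₂ * (Real.exp (κ₂ * t) - 1) := by
    field_simp
  have h5 : a * (κ₂ * t) = κ₂ * a * t := by ring
  rw [h4, h5] at h3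
  linarith
end

section
/- Let p, q : ℝ^d → ℝ be continuously differentiable, let η₁ = sup_x ‖∇p(x) − ∇q(x)‖, and assume p is twice differentiable with κ₂ := sup_x ‖∇²p(x)‖ ∈ (0, ∞) (operator norm, so ∇p is κ₂-Lipschitz) and 0 < η₁ < (κ₂ √d)². Let P > 0, γ₀ > 0, and set δ = ( κ₂ √d · P / log(κ₂ √d / √η₁) )^{1/(2γ₀)}. Let π, π̃ : [0, ∞) → ℝ^d be differentiable with π(0) = π̃(0) = x, π′(t) = ∇p(π(t)), π̃′(t) = ∇q(π̃(t)). Then for every time T with 0 ≤ T ≤ P / δ^{2γ₀}, one has ‖π̃(T) − π(T)‖ ≤ √η₁. -/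
open Real Set

/-- Let `p, q : ℝ^d → ℝ` be continuously differentiable with
`sup_x ‖∇p(x) − ∇q(x)‖ ≤ η₁`, `p` twice differentiable with `sup_x ‖∇²p(x)‖ ≤ κ₂`
(operator norm), `0 < κ₂`, and `0 < η₁ < (κ₂ √d)²`.  Let `P > 0`, `γ₀ > 0` and
`δ = (κ₂ √d P / log(κ₂ √d / √η₁))^{1/(2γ₀)}`.  If `π₁, π₂` are gradient flow lines of `p`
and `q` starting at the same point `x`, then for every `T` with `0 ≤ T ≤ P / δ^{2γ₀}`,
`‖π₂(T) − π₁(T)‖ ≤ √η₁`. -/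
theorem flow_perturbation_bound_up_to_time (d : ℕ) (hd : 1 ≤ d)
    (p q : EuclideanSpace ℝ (Fin d) → ℝ)
    (hp : ContDiff ℝ 2 p) (hq : ContDiff ℝ 1 q)
    (η₁ : ℝ) (hη₁_pos : 0 < η₁)
    (hη₁ : ∀ x, ‖gradient p x - gradient q x‖ ≤ η₁)
    (κ₂ : ℝ) (hκ₂_pos : 0 < κ₂)
    (hκ₂ : ∀ x, ‖fderiv ℝ (gradient p) x‖ ≤ κ₂)
    (hη₁_small : η₁ < (κ₂ * Real.sqrt d) ^ 2)
    (P : ℝ) (hP : 0 < P) (γ₀ : ℝ) (hγ₀ : 0 < γ₀)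
    (δ : ℝ)
    (hδ : δ = (κ₂ * Real.sqrt d * P /
        Real.log (κ₂ * Real.sqrt d / Real.sqrt η₁)) ^ (1 / (2 * γ₀)))
    (x : EuclideanSpace ℝ (Fin d))
    (π₁ π₂ : ℝ → EuclideanSpace ℝ (Fin d))
    (h₁0 : π₁ 0 = x) (h₂0 : π₂ 0 = x)
    (hπ₁ : ∀ t : ℝ, 0 ≤ t → HasDerivAt π₁ (gradient p (π₁ t)) t)
    (hπ₂ : ∀ t : ℝ, 0 ≤ t → HasDerivAt π₂ (gradient q (π₂ t)) t) :
    ∀ T : ℝ, 0 ≤ T → T ≤ P / δ ^ (2 * γ₀) → ‖π₂ T - π₁ T‖ ≤ Real.sqrt η₁ := by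
  intro T hT0 hTle
  -- basic numeric facts
  set s := Real.sqrt d with hs_def
  have hs1 : 1 ≤ s := by
    rw [hs_def, show (1:ℝ) = Real.sqrt 1 by simp]
    exact Real.sqrt_le_sqrt (by exact_mod_cast hd)
  have hs0 : 0 < s := lt_of_lt_of_le one_pos hs1
  have hsq : 0 < Real.sqrt η₁ := Real.sqrt_pos.2 hη₁_pos
  have hκs : 0 < κ₂ * s := mul_pos hκ₂_pos hs0
  have hRgt1 : 1 < κ₂ * s / Real.sqrt η₁ := by
    rw [lt_div_iff₀ hsq, one_mul]
    have := Real.sqrt_lt_sqrt hη₁_pos.le hη₁_small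
    rwa [Real.sqrt_sq hκs.le] at this
  set R := κ₂ * s / Real.sqrt η₁ with hR_def
  have hL : 0 < Real.log R := Real.log_pos hRgt1
  have hA : 0 < κ₂ * s * P / Real.log R := div_pos (mul_pos hκs hP) hL
  -- δ ^ (2γ₀) = A
  have hδpow : δ ^ (2 * γ₀) = κ₂ * s * P / Real.log R := by
    rw [hδ, ← Real.rpow_mul hA.le, one_div, inv_mul_cancel₀ (by positivity)]
    exact Real.rpow_one _
  -- hence T ≤ log R / (κ₂ s)
  have hTbound : κ₂ * T ≤ Real.log R / s := by
    have : T ≤ Real.log R / (κ₂ * s) := by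
      rw [hδpow] at hTle
      calc T ≤ P / (κ₂ * s * P / Real.log R) := hTle
        _ = Real.log R / (κ₂ * s) := by field_simp
    calc κ₂ * T ≤ κ₂ * (Real.log R / (κ₂ * s)) :=
          mul_le_mul_of_nonneg_left this hκ₂_pos.le
      _ = Real.log R / s := by field_simp
  -- gradient p is differentiable
  have hgrad_diff : Differentiable ℝ (gradient p) := by
    have h1 : ContDiff ℝ 1 (fderiv ℝ p) := hp.fderiv_right (le_refl _)
    have h2 : Differentiable ℝ (fun y => (InnerProductSpace.toDual ℝ
        (EuclideanSpace ℝ (Fin d))).symm (fderiv ℝ p y)) :=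
      (InnerProductSpace.toDual ℝ _).symm.toContinuousLinearEquiv.differentiable.comp
        (h1.differentiable one_ne_zero)
    exact h2
  -- Lipschitz bound on gradient p
  have hlip : ∀ a b : EuclideanSpace ℝ (Fin d),
      ‖gradient p a - gradient p b‖ ≤ κ₂ * ‖a - b‖ := by
    intro a b
    exact Convex.norm_image_sub_le_of_norm_fderiv_le
      (fun y _ => hgrad_diff y) (fun y _ => hκ₂ y)
      convex_univ (mem_univ b) (mem_univ a)
  -- Gronwall
  set f : ℝ → EuclideanSpace ℝ (Fin d) := fun t => π₂ t - π₁ t with hf_def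
  have hfderiv : ∀ t ∈ Ico (0:ℝ) T,
      HasDerivWithinAt f (gradient q (π₂ t) - gradient p (π₁ t)) (Ici t) t :=
    fun t ht => (((hπ₂ t ht.1).sub (hπ₁ t ht.1)).hasDerivWithinAt)
  have hfcont : ContinuousOn f (Icc 0 T) := fun t ht =>
    (((hπ₂ t ht.1).sub (hπ₁ t ht.1)).continuousAt).continuousWithinAt
  have hf0 : ‖f 0‖ ≤ 0 := by simp [hf_def, h₁0, h₂0]
  have hbound : ∀ t ∈ Ico (0:ℝ) T,
      ‖gradient q (π₂ t) - gradient p (π₁ t)‖ ≤ κ₂ * ‖f t‖ + η₁ := by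
    intro t _
    have heq : gradient q (π₂ t) - gradient p (π₁ t)
        = (gradient p (π₂ t) - gradient p (π₁ t))
            - (gradient p (π₂ t) - gradient q (π₂ t)) := by abel
    calc ‖gradient q (π₂ t) - gradient p (π₁ t)‖
        = ‖(gradient p (π₂ t) - gradient p (π₁ t))
            - (gradient p (π₂ t) - gradient q (π₂ t))‖ := by rw [heq]
      _ ≤ ‖gradient p (π₂ t) - gradient p (π₁ t)‖
            + ‖gradient p (π₂ t) - gradient q (π₂ t)‖ := norm_sub_le _ _
      _ ≤ κ₂ * ‖f t‖ + η₁ := add_le_add (hlip _ _) (hη₁ _)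
  have hgron := norm_le_gronwallBound_of_norm_deriv_right_le hfcont hfderiv hf0 hbound
    T (by constructor <;> [exact hT0; exact le_refl T])
  rw [sub_zero, gronwallBound_of_K_ne_0 hκ₂_pos.ne'] at hgron
  simp only [zero_mul, zero_add] at hgron
  -- final numeric estimate
  have hexp : Real.exp (κ₂ * T) ≤ 1 + κ₂ / Real.sqrt η₁ := by
    have h1 : Real.exp (κ₂ * T) ≤ Real.exp (Real.log R / s) :=
      Real.exp_le_exp.2 hTbound
    have h2 : Real.exp (Real.log R / s) = R ^ (1/s) := by
      rw [Real.rpow_def_of_pos (lt_trans one_pos hRgt1), div_eq_mul_inv, one_div,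
        mul_comm]
    have h3 : R ^ (1/s) ≤ 1 + (1/s) * (R - 1) := by
      have := rpow_one_add_le_one_add_mul_self (s := R - 1)
        (by linarith) (p := 1/s) (by positivity) (by
          rw [div_le_one hs0]; exact hs1)
      simpa using this
    have h4 : 1 + (1/s) * (R - 1) ≤ 1 + κ₂ / Real.sqrt η₁ := by
      have : (1/s) * (R - 1) ≤ (1/s) * R :=
        mul_le_mul_of_nonneg_left (by linarith) (by positivity)
      have h5 : (1/s) * R = κ₂ / Real.sqrt η₁ := by
        rw [hR_def]; field_simp
      linarith [this, h5.le]
    calc Real.exp (κ₂ * T) ≤ R ^ (1/s) := h2 ▸ h1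
      _ ≤ _ := le_trans h3 h4
  calc ‖f T‖ ≤ η₁ / κ₂ * (Real.exp (κ₂ * T) - 1) := hgron
    _ ≤ η₁ / κ₂ * (κ₂ / Real.sqrt η₁) := by
        apply mul_le_mul_of_nonneg_left _ (by positivity)
        linarith
    _ = Real.sqrt η₁ := by
        rw [div_mul_div_comm, mul_comm η₁ κ₂, mul_div_mul_left _ _ hκ₂_pos.ne',
          eq_comm, eq_div_iff hsq.ne', Real.mul_self_sqrt hη₁_pos.le]
end
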